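/- Let k ≥ 1 be an integer, let z < 0 be a real number, and define g : (0,∞) → ℝ by g(S) = e^{S/z} · ∑_{i=0}^{k−1} (−1)^i · ((k−1)!/(k−1−i)!) · S^{−i−1} z^i. Then g solves the differential equation z·S·g'(S) + k·z·g(S) = e^{S/z} for all S > 0. -/

import Mathlib

/-- The explicit solution `g(S) = e^{S/z} ∑_{i=0}^{k-1} (-1)^i ((k-1)!/(k-1-i)!) S^{-i-1} z^i`
of the Mellin–Barnes differential equation. -/
noncomputable def mellinBarnesSolution (k : ℕ) (z : ℝ) (S : ℝ) : ℝ :=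
  Real.exp (S / z) *
    ∑ i ∈ Finset.range k,
      (-1 : ℝ) ^ i * ((Nat.factorial (k - 1) / Nat.factorial (k - 1 - i) : ℕ) : ℝ) *
        S ^ (-(i : ℤ) - 1) * z ^ i

theorem mellinBarnesSolution_solves_ODE (k : ℕ) (hk : 1 ≤ k) (z : ℝ) (hz : z < 0) :
    ∀ S : ℝ, 0 < S → ∃ g' : ℝ,
      HasDerivAt (mellinBarnesSolution k z) g' S ∧
      z * S * g' + (k : ℝ) * z * mellinBarnesSolution k z S = Real.exp (S / z) := by
  obtain ⟨m, rfl⟩ : ∃ m, k = m + 1 := ⟨k - 1, (Nat.succ_pred_eq_of_pos hk).symm⟩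
  intro S hS
  have hS' : S ≠ 0 := ne_of_gt hS
  have hz' : z ≠ 0 := ne_of_lt hz
  set F : ℝ := ∑ i ∈ Finset.range (m + 1),
      (-1 : ℝ) ^ i * ((Nat.factorial m / Nat.factorial (m - i) : ℕ) : ℝ)
        * S ^ (-(i : ℤ) - 1) * z ^ i with hF_def
  set F' : ℝ := ∑ i ∈ Finset.range (m + 1),
      (-1 : ℝ) ^ i * ((Nat.factorial m / Nat.factorial (m - i) : ℕ) : ℝ)
        * ((-(i : ℤ) - 1) * S ^ (-(i : ℤ) - 2)) * z ^ i with hF'_def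
  have hsum : HasDerivAt (fun S : ℝ => ∑ i ∈ Finset.range (m + 1),
      (-1 : ℝ) ^ i * ((Nat.factorial m / Nat.factorial (m - i) : ℕ) : ℝ)
        * S ^ (-(i : ℤ) - 1) * z ^ i) F' S := by
    rw [hF'_def]
    apply HasDerivAt.fun_sum
    intro i _
    have h := hasDerivAt_zpow (-(i : ℤ) - 1) S (Or.inl hS')
    have h2 : (-(i : ℤ) - 1 - 1) = (-(i : ℤ) - 2) := by ring
    rw [h2] at h
    have := (h.const_mul ((-1 : ℝ) ^ i * ((Nat.factorial m / Nat.factorial (m - i) : ℕ) : ℝ))).mul_const (z ^ i)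
    convert this using 1
    · rfl
    push_cast
    ring
  have hexp : HasDerivAt (fun S : ℝ => Real.exp (S / z)) (Real.exp (S / z) * (1 / z)) S := by
    have h1 : HasDerivAt (fun S : ℝ => S / z) (1 / z) S := by
      simpa using (hasDerivAt_id S).div_const z
    exact h1.exp
  have hg : HasDerivAt (mellinBarnesSolution (m + 1) z)
      (Real.exp (S / z) * (1 / z) * F + Real.exp (S / z) * F') S := by
    unfold mellinBarnesSolution
    exact hexp.fun_mul hsum
  refine ⟨_, hg, ?_⟩
  have key : S * F + z * S * F' + ((m : ℝ) + 1) * z * F = 1 := by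
    set b : ℕ → ℝ := fun i => (-1 : ℝ) ^ i * (Nat.descFactorial m i : ℝ) * z ^ i * S ^ (-(i : ℤ)) with hb
    have : S * F + z * S * F' + ((m : ℝ) + 1) * z * F
        = ∑ i ∈ Finset.range (m + 1), (b i - b (i + 1)) := by
      rw [hF_def, hF'_def, Finset.mul_sum, Finset.mul_sum, Finset.mul_sum,
        ← Finset.sum_add_distrib, ← Finset.sum_add_distrib]
      apply Finset.sum_congr rfl
      intro i hi
      have hi' : i ≤ m := Nat.lt_succ_iff.mp (Finset.mem_range.mp hi)
      rw [← Nat.descFactorial_eq_div hi']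
      rw [hb]
      simp only [Nat.descFactorial_succ]
      have e1 : S ^ (-(i : ℤ) - 1) = S ^ (-(i : ℤ)) * S⁻¹ := by
        rw [zpow_sub₀ hS', zpow_one]; rfl
      have e2 : S ^ (-(i : ℤ) - 2) = S ^ (-(i : ℤ)) * (S⁻¹ * S⁻¹) := by
        rw [show (-(i : ℤ) - 2) = (-(i : ℤ) - 1) - 1 by ring, zpow_sub₀ hS', e1, zpow_one]
        ring
      have e3 : (-(((i : ℕ) + 1 : ℕ) : ℤ)) = -(i : ℤ) - 1 := by push_cast; ring
      rw [e3, e1, e2]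
      have hc : ((m - i : ℕ) : ℝ) = (m : ℝ) - (i : ℝ) := by
        exact Nat.cast_sub hi'
      push_cast [hc]
      field_simp
      ring
    rw [this, Finset.sum_range_sub' b (m + 1)]
    have h0 : b 0 = 1 := by simp [hb]
    have hm : b (m + 1) = 0 := by
      simp [hb, Nat.descFactorial_eq_zero_iff_lt.mpr (Nat.lt_succ_self m)]
    rw [h0, hm]; ring
  have : mellinBarnesSolution (m + 1) z S = Real.exp (S / z) * F := by
    simp [mellinBarnesSolution, hF_def]
  rw [this]
  have expand : z * S * (Real.exp (S / z) * (1 / z) * F + Real.exp (S / z) * F')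
      + ((m : ℕ) + 1 : ℝ) * z * (Real.exp (S / z) * F)
      = Real.exp (S / z) * (S * F + z * S * F' + ((m : ℝ) + 1) * z * F) := by
    field_simp
  push_cast at expand ⊢
  rw [expand, key, mul_one]
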